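/- arXiv:1811.02221 — 5 statements merged into one kernel-verified Lean document; each statement's English description precedes it below -/
import Mathlib

section
/- Let B be a building set on [n+1] and S ∈ B. Then the contraction B/S = { T ⊆ [n+1] \ S : T ∈ B, or T ⊔ S ∈ B } is a building set on the set [n+1] \ S. -/
/-- A building set on the vertex set `V`. -/
def IsBuildingSet (V : Finset ℕ) (B : Set (Finset ℕ)) : Prop :=
  (∀ S ∈ B, S.Nonempty ∧ S ⊆ V) ∧
  (∀ i ∈ V, ({i} : Finset ℕ) ∈ B) ∧
  (∀ S₁ ∈ B, ∀ S₂ ∈ B, (S₁ ∩ S₂).Nonempty → S₁ ∪ S₂ ∈ B)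

theorem contraction_isBuildingSet (n : ℕ) (B : Set (Finset ℕ))
    (hB : IsBuildingSet (Finset.Icc 1 (n + 1)) B) (S : Finset ℕ) (hS : S ∈ B) :
    IsBuildingSet (Finset.Icc 1 (n + 1) \ S)
      {T | T.Nonempty ∧ T ⊆ Finset.Icc 1 (n + 1) \ S ∧ (T ∈ B ∨ T ∪ S ∈ B)} := by
  obtain ⟨hsub, hsing, hunion⟩ := hB
  obtain ⟨hSne, hSsub⟩ := hsub S hS
  refine ⟨fun T hT => ⟨hT.1, hT.2.1⟩, ?_, ?_⟩
  · intro i hi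
    rcases Finset.mem_sdiff.mp hi with ⟨hiI, hiS⟩
    exact ⟨Finset.singleton_nonempty i, Finset.singleton_subset_iff.mpr hi,
      Or.inl (hsing i hiI)⟩
  · rintro T₁ ⟨h1ne, h1sub, h1⟩ T₂ ⟨h2ne, h2sub, h2⟩ hint
    refine ⟨h1ne.mono Finset.subset_union_left, Finset.union_subset h1sub h2sub, ?_⟩
    have hSint : ∀ T, T ∪ S ∈ B → ((T ∪ S) ∩ S).Nonempty := fun T _ =>
      hSne.mono (Finset.subset_inter Finset.subset_union_right (subset_refl S))
    rcases h1 with h1 | h1 <;> rcases h2 with h2 | h2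
    · exact Or.inl (hunion _ h1 _ h2 hint)
    · refine Or.inr ?_
      have : T₁ ∪ (T₂ ∪ S) ∈ B := hunion _ h1 _ h2
        (hint.mono (Finset.inter_subset_inter (subset_refl _) Finset.subset_union_left))
      rwa [← Finset.union_assoc] at this
    · refine Or.inr ?_
      have : (T₁ ∪ S) ∪ T₂ ∈ B := hunion _ h1 _ h2
        (hint.mono (Finset.inter_subset_inter Finset.subset_union_left (subset_refl _)))
      have heq : (T₁ ∪ S) ∪ T₂ = (T₁ ∪ T₂) ∪ S := by
        rw [Finset.union_right_comm]
      rwa [heq] at this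
    · refine Or.inr ?_
      have : (T₁ ∪ S) ∪ (T₂ ∪ S) ∈ B := hunion _ h1 _ h2
        ((hSint T₁ h1).mono (Finset.inter_subset_inter (subset_refl _) Finset.subset_union_right))
      have heq : (T₁ ∪ S) ∪ (T₂ ∪ S) = (T₁ ∪ T₂) ∪ S := by
        ext x; simp [Finset.mem_union]; tauto
      rwa [heq] at this
end

section
/- Let B(P,n) (n ≥ 2) be the building set on [n+1] consisting of all singletons, all sets of the form {1,2} ∪ T with T ⊆ {3,...,n+1}, all sets {1} ∪ T with ∅ ≠ T ⊆ {3,...,n}, and [n+1]. Then every element S of B(P,n) with |S| ≥ 2 can be written as a disjoint union S = S₁ ⊔ S₂ with S₁, S₂ ∈ B(P,n). -/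
/-- The building set `B(P,n)` on `[n+1]` defining the family `𝒫_Mas`:
all singletons, all sets `{1,2} ∪ T` with `T ⊆ {3,…,n+1}`,
all sets `{1} ∪ T` with `∅ ≠ T ⊆ {3,…,n}`, and `[n+1]` itself. -/
def BP (n : ℕ) : Set (Finset ℕ) :=
  {S | ∃ i ∈ Finset.Icc 1 (n + 1), S = {i}} ∪
  {S | ∃ T ⊆ Finset.Icc 3 (n + 1), S = {1, 2} ∪ T} ∪
  {S | ∃ T : Finset ℕ, T ⊆ Finset.Icc 3 n ∧ T.Nonempty ∧ S = {1} ∪ T} ∪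
  {Finset.Icc 1 (n + 1)}

lemma BP_sing (n i : ℕ) (h1 : 1 ≤ i) (h2 : i ≤ n + 1) : ({i} : Finset ℕ) ∈ BP n := by
  left; left; left
  exact ⟨i, Finset.mem_Icc.mpr ⟨h1, h2⟩, rfl⟩

/-- Flagness criterion: every non-singleton element of `B(P,n)` is a disjoint union of
two elements of `B(P,n)`. -/
theorem BP_flag (n : ℕ) (hn : 2 ≤ n) (S : Finset ℕ) (hS : S ∈ BP n) (hcard : 2 ≤ S.card) :
    ∃ S₁ ∈ BP n, ∃ S₂ ∈ BP n, Disjoint S₁ S₂ ∧ S = S₁ ∪ S₂ := by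
  rcases hS with ((⟨i, hi, rfl⟩ | ⟨T, hT, rfl⟩) | ⟨T, hT, hTne, rfl⟩) | hS
  · simp at hcard
  · rcases T.eq_empty_or_nonempty with rfl | ⟨t, ht⟩
    · refine ⟨{1}, BP_sing n 1 le_rfl (by omega), {2}, BP_sing n 2 (by omega) (by omega), ?_, ?_⟩
      · simp
      · simp [Finset.union_comm]
    · have htI := Finset.mem_Icc.mp (hT ht)
      refine ⟨{t}, BP_sing n t (by omega) htI.2, {1, 2} ∪ T.erase t, ?_, ?_, ?_⟩
      · left; left; right
        exact ⟨T.erase t, (Finset.erase_subset _ _).trans hT, rfl⟩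
      · simp only [Finset.disjoint_singleton_left, Finset.mem_union, Finset.mem_erase,
          Finset.mem_insert, Finset.mem_singleton]
        omega
      · ext a
        simp only [Finset.mem_union, Finset.mem_erase, Finset.mem_insert, Finset.mem_singleton]
        by_cases h : a = t <;> simp [h, ht]
  · obtain ⟨t, ht⟩ := hTne
    have htI := Finset.mem_Icc.mp (hT ht)
    rcases (T.erase t).eq_empty_or_nonempty with he | hne
    · have hTt : T = {t} := by
        apply Finset.eq_singleton_iff_unique_mem.mpr
        refine ⟨ht, fun x hx => ?_⟩
        by_contra hxt
        exact (Finset.eq_empty_iff_forall_notMem.mp he x) (Finset.mem_erase.mpr ⟨hxt, hx⟩)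
      refine ⟨{1}, BP_sing n 1 le_rfl (by omega), {t}, BP_sing n t (by omega) (by omega),
        by simp; omega, by rw [hTt]⟩
    · refine ⟨{t}, BP_sing n t (by omega) (by omega), {1} ∪ T.erase t, ?_, ?_, ?_⟩
      · left; right
        exact ⟨T.erase t, (Finset.erase_subset _ _).trans hT, hne, rfl⟩
      · simp only [Finset.disjoint_singleton_left, Finset.mem_union, Finset.mem_erase,
          Finset.mem_singleton]
        omega
      · ext a
        simp only [Finset.mem_union, Finset.mem_erase, Finset.mem_singleton]
        by_cases h : a = t <;> simp [h, ht]
  · simp only [Set.mem_singleton_iff] at hS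
    subst hS
    refine ⟨{n + 1}, BP_sing n (n + 1) (by omega) le_rfl, {1, 2} ∪ Finset.Icc 3 n, ?_, ?_, ?_⟩
    · left; left; right
      exact ⟨Finset.Icc 3 n, Finset.Icc_subset_Icc_right (by omega), rfl⟩
    · simp only [Finset.disjoint_singleton_left, Finset.mem_union, Finset.mem_insert,
        Finset.mem_singleton, Finset.mem_Icc]
      omega
    · ext a
      simp only [Finset.mem_union, Finset.mem_insert, Finset.mem_singleton, Finset.mem_Icc]
      omega
end

section
/- Let B(Γ,n) (n ≥ 2) be the collection of subsets of [n+1] consisting of all singletons, all subsets of {1,...,n} of cardinality at least 2, all sets of the form {1} ∪ T ∪ {n+1} with T ⊆ {2,...,n}, and [n+1]. Then B(Γ,n) is a connected building set on [n+1], and every S ∈ B(Γ,n) with |S| ≥ 2 decomposes as a disjoint union of two elements of B(Γ,n). -/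
/-- The building set `B(Γ,n)` on `[n+1]`: all singletons, all subsets of `[n]` of
cardinality at least 2, all sets `{1} ∪ T ∪ {n+1}` with `T ⊆ {2,…,n}`, and `[n+1]`. -/
def BG (n : ℕ) : Set (Finset ℕ) :=
  {S | ∃ i ∈ Finset.Icc 1 (n + 1), S = {i}} ∪
  {S | S ⊆ Finset.Icc 1 n ∧ 2 ≤ S.card} ∪
  {S | ∃ T ⊆ Finset.Icc 2 n, S = {1} ∪ T ∪ {n + 1}} ∪
  {Finset.Icc 1 (n + 1)}

lemma BG_singleton (n i : ℕ) (hi : i ∈ Finset.Icc 1 (n+1)) : ({i} : Finset ℕ) ∈ BG n := by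
  left; left; left; exact ⟨i, hi, rfl⟩

lemma BG_sub (n : ℕ) {S : Finset ℕ} (hS : S.Nonempty) (h : S ⊆ Finset.Icc 1 n) : S ∈ BG n := by
  rcases Nat.lt_or_ge S.card 2 with h2 | h2
  · have h1 : S.card = 1 := le_antisymm (by omega) hS.card_pos
    obtain ⟨i, hi⟩ := Finset.card_eq_one.mp h1
    subst hi
    apply BG_singleton
    have := h (Finset.mem_singleton_self i)
    simp only [Finset.mem_Icc] at this ⊢; omega
  · left; left; right; exact ⟨h, h2⟩

lemma BG_type3 (n : ℕ) {T : Finset ℕ} (hT : T ⊆ Finset.Icc 2 n) :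
    ({1} ∪ T ∪ {n+1} : Finset ℕ) ∈ BG n := by
  left; right; exact ⟨T, hT, rfl⟩

lemma Icc_split (n : ℕ) (hn : 1 ≤ n) :
    Finset.Icc 1 (n+1) = ({1} ∪ Finset.Icc 2 n ∪ {n+1} : Finset ℕ) := by
  ext x
  simp only [Finset.mem_Icc, Finset.mem_union, Finset.mem_singleton]
  omega

lemma BG_iff (n : ℕ) (hn : 1 ≤ n) {S : Finset ℕ} :
    S ∈ BG n ↔ S = {n+1} ∨ (S.Nonempty ∧ S ⊆ Finset.Icc 1 n) ∨
      ∃ T ⊆ Finset.Icc 2 n, S = {1} ∪ T ∪ {n+1} := by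
  constructor
  · rintro (((⟨i, hi, rfl⟩ | ⟨h1, h2⟩) | ⟨T, hT, rfl⟩) | h)
    · simp only [Finset.mem_Icc] at hi
      rcases Nat.lt_or_ge i (n+1) with h | h
      · exact Or.inr (Or.inl ⟨Finset.singleton_nonempty i, by
          simp only [Finset.singleton_subset_iff, Finset.mem_Icc]; omega⟩)
      · left; congr 1; omega
    · refine Or.inr (Or.inl ⟨?_, h1⟩)
      exact Finset.card_pos.mp (by omega)
    · exact Or.inr (Or.inr ⟨T, hT, rfl⟩)
    · simp only [Set.mem_singleton_iff] at h
      exact Or.inr (Or.inr ⟨Finset.Icc 2 n, le_refl _, by rw [h, Icc_split n hn]⟩)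
  · rintro (rfl | ⟨h1, h2⟩ | ⟨T, hT, rfl⟩)
    · exact BG_singleton n _ (by simp only [Finset.mem_Icc]; omega)
    · exact BG_sub n h1 h2
    · exact BG_type3 n hT

theorem BG_buildingSet_and_flag (n : ℕ) (hn : 2 ≤ n) :
    (IsBuildingSet (Finset.Icc 1 (n + 1)) (BG n) ∧ Finset.Icc 1 (n + 1) ∈ BG n) ∧
    ∀ S ∈ BG n, 2 ≤ S.card →
      ∃ S₁ ∈ BG n, ∃ S₂ ∈ BG n, Disjoint S₁ S₂ ∧ S = S₁ ∪ S₂ := by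
  have hn1 : 1 ≤ n := by omega
  refine ⟨⟨⟨?_, ?_, ?_⟩, ?_⟩, ?_⟩
  · -- nonempty & subset
    intro S hS
    rw [BG_iff n hn1] at hS
    rcases hS with rfl | ⟨h1, h2⟩ | ⟨T, hT, rfl⟩
    · refine ⟨Finset.singleton_nonempty _, ?_⟩
      simp only [Finset.singleton_subset_iff, Finset.mem_Icc]; omega
    · exact ⟨h1, h2.trans (Finset.Icc_subset_Icc_right (by omega))⟩
    · refine ⟨⟨1, by simp⟩, ?_⟩
      intro x hx
      simp only [Finset.mem_union, Finset.mem_singleton] at hx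
      simp only [Finset.mem_Icc]
      rcases hx with (rfl | hx) | rfl
      · omega
      · have := hT hx; simp only [Finset.mem_Icc] at this; omega
      · omega
  · intro i hi
    exact BG_singleton n i hi
  · -- union closure
    intro S₁ hS₁ S₂ hS₂ hint
    rw [BG_iff n hn1] at hS₁ hS₂ ⊢
    obtain ⟨x, hx⟩ := hint
    simp only [Finset.mem_inter] at hx
    rcases hS₁ with rfl | ⟨h1, h2⟩ | ⟨T₁, hT₁, rfl⟩ <;>
      rcases hS₂ with rfl | ⟨h1', h2'⟩ | ⟨T₂, hT₂, rfl⟩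
    · left; simp
    · -- {n+1} ∪ S₂, S₂ ⊆ Icc 1 n: impossible
      exfalso
      have := h2' hx.2
      simp only [Finset.mem_singleton] at hx
      simp only [Finset.mem_Icc] at this; omega
    · right; right
      refine ⟨T₂, hT₂, ?_⟩
      ext y
      simp only [Finset.mem_union, Finset.mem_singleton]; tauto
    · exfalso
      have := h2 hx.1
      simp only [Finset.mem_singleton] at hx
      simp only [Finset.mem_Icc] at this; omega
    · right; left
      exact ⟨(Finset.Nonempty.mono Finset.subset_union_left h1 : (S₁ ∪ S₂).Nonempty),
        Finset.union_subset h2 h2'⟩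
    · right; right
      refine ⟨T₂ ∪ S₁.erase 1, ?_, ?_⟩
      · apply Finset.union_subset hT₂
        intro y hy
        simp only [Finset.mem_erase] at hy
        have := h2 hy.2
        simp only [Finset.mem_Icc] at this ⊢; omega
      · ext y
        simp only [Finset.mem_union, Finset.mem_singleton, Finset.mem_erase]
        by_cases hy1 : y = 1 <;> tauto
    · right; right
      refine ⟨T₁, hT₁, ?_⟩
      ext y
      simp only [Finset.mem_union, Finset.mem_singleton]; tauto
    · right; right
      refine ⟨T₁ ∪ S₂.erase 1, ?_, ?_⟩
      · apply Finset.union_subset hT₁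
        intro y hy
        simp only [Finset.mem_erase] at hy
        have := h2' hy.2
        simp only [Finset.mem_Icc] at this ⊢; omega
      · ext y
        simp only [Finset.mem_union, Finset.mem_singleton, Finset.mem_erase]
        by_cases hy1 : y = 1 <;> tauto
    · right; right
      refine ⟨T₁ ∪ T₂, Finset.union_subset hT₁ hT₂, ?_⟩
      ext y
      simp only [Finset.mem_union, Finset.mem_singleton]; tauto
  · -- connected
    right
    rfl
  · -- decomposition
    intro S hS hcard
    rw [BG_iff n hn1] at hS
    rcases hS with rfl | ⟨h1, h2⟩ | ⟨T, hT, rfl⟩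
    · simp at hcard
    · obtain ⟨x, hx⟩ := h1
      refine ⟨{x}, BG_singleton n x ((h2.trans (Finset.Icc_subset_Icc_right (by omega))) hx),
        S.erase x, BG_sub n ?_ ((Finset.erase_subset x S).trans h2), ?_, ?_⟩
      · rw [← Finset.card_pos, Finset.card_erase_of_mem hx]; omega
      · simp [Finset.disjoint_singleton_left]
      · rw [← Finset.insert_eq, Finset.insert_erase hx]
    · refine ⟨{1} ∪ T, BG_sub n ⟨1, by simp⟩ ?_, {n+1},
        BG_singleton n _ (by simp only [Finset.mem_Icc]; omega), ?_, rfl⟩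
      · apply Finset.union_subset
        · simp only [Finset.singleton_subset_iff, Finset.mem_Icc]; omega
        · exact hT.trans (Finset.Icc_subset_Icc_left (by omega))
      · simp only [Finset.disjoint_singleton_right, Finset.mem_union, Finset.mem_singleton]
        push_neg
        refine ⟨by omega, fun h => ?_⟩
        have := hT h; simp only [Finset.mem_Icc] at this; omega
end

section
/- There exist a connected building set B = B(P,4) on [5], an element S = {1,3} ∈ B, and two elements S₁ = {2}, S₂ = {4} of the contraction B/S such that S₁ ⊔ S₂ ∈ B/S but, regarding S₁, S₂ as elements of B, S₁ ⊔ S₂ ∉ B. Consequently, the nested set complex N_{B/S} is not isomorphic to the full subcomplex of N_B on the vertex set (B/S) ∩ B. -/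
/-- The nested set complex of a building set `B` with maximal element `V`. -/
def nestedSetComplex (V : Finset ℕ) (B : Set (Finset ℕ)) : Set (Finset (Finset ℕ)) :=
  {σ | (∀ T ∈ σ, T ∈ B ∧ T ≠ V) ∧
       (∀ T₁ ∈ σ, ∀ T₂ ∈ σ, Disjoint T₁ T₂ ∨ T₁ ⊆ T₂ ∨ T₂ ⊆ T₁) ∧
       (∀ 𝒮 : Finset (Finset ℕ), 𝒮 ⊆ σ → 2 ≤ 𝒮.card →
          (↑𝒮 : Set (Finset ℕ)).Pairwise Disjoint → 𝒮.sup id ∉ B)}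

lemma singleton_mem_BP {i : ℕ} (hi : i ∈ Finset.Icc 1 5) : ({i} : Finset ℕ) ∈ BP 4 :=
  Or.inl (Or.inl (Or.inl ⟨i, hi, rfl⟩))

lemma mem_BP_cases {T : Finset ℕ} (h : T ∈ BP 4) :
    (∃ i, T = {i}) ∨ 1 ∈ T := by
  rcases h with ((⟨i, _, rfl⟩ | ⟨t, _, rfl⟩) | ⟨t, _, _, rfl⟩) | rfl
  · exact Or.inl ⟨i, rfl⟩
  · right; simp
  · right; simp
  · right; decide

lemma pair24_not_mem : ({2, 4} : Finset ℕ) ∉ BP 4 := by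
  intro h
  rcases mem_BP_cases h with ⟨i, hi⟩ | h1
  · have h2 : (2 : ℕ) ∈ ({i} : Finset ℕ) := hi ▸ (by decide)
    have h4 : (4 : ℕ) ∈ ({i} : Finset ℕ) := hi ▸ (by decide)
    simp at h2 h4
    omega
  · revert h1; decide

/-- The counterexample: for `B = B(P,4)` and `S = {1,3} ∈ B`, the elements
`S₁ = {2}`, `S₂ = {4}` of the contraction `B/S` satisfy `S₁ ⊔ S₂ ∈ B/S` but
`S₁ ⊔ S₂ ∉ B`; consequently the nested set complex `N_{B/S}` is not isomorphic to the
full subcomplex of `N_B` on the vertex set `(B/S) ∩ B`. -/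
theorem contraction_not_full_subcomplex :
    let V : Finset ℕ := Finset.Icc 1 5
    let B : Set (Finset ℕ) := BP 4
    let S : Finset ℕ := {1, 3}
    let C : Set (Finset ℕ) :=
      {T | T.Nonempty ∧ T ⊆ V \ S ∧ (T ∈ B ∨ T ∪ S ∈ B)}
    S ∈ B ∧ ({2} : Finset ℕ) ∈ C ∧ ({4} : Finset ℕ) ∈ C ∧
      Disjoint ({2} : Finset ℕ) ({4} : Finset ℕ) ∧
      ({2} : Finset ℕ) ∪ {4} ∈ C ∧ ({2} : Finset ℕ) ∪ {4} ∉ B ∧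
      ({{2}, {4}} : Finset (Finset ℕ)) ∈
        {σ ∈ nestedSetComplex V B | ∀ T ∈ σ, T ∈ C ∩ B} ∧
      ({{2}, {4}} : Finset (Finset ℕ)) ∉ nestedSetComplex (V \ S) C ∧
      ¬∃ f : Finset ℕ → Finset ℕ, Set.BijOn f (C ∩ B) (C \ {V \ S}) ∧
        ∀ σ : Finset (Finset ℕ), (∀ T ∈ σ, T ∈ C ∩ B) →
          (σ ∈ {σ' ∈ nestedSetComplex V B | ∀ T ∈ σ', T ∈ C ∩ B} ↔
            σ.image f ∈ nestedSetComplex (V \ S) C) := by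
  intro V B S C
  -- basic membership facts
  have hS : S ∈ B := Or.inl (Or.inr ⟨{3}, by decide, by decide⟩)
  have h2B : ({2} : Finset ℕ) ∈ B := singleton_mem_BP (by decide)
  have h4B : ({4} : Finset ℕ) ∈ B := singleton_mem_BP (by decide)
  have h5B : ({5} : Finset ℕ) ∈ B := singleton_mem_BP (by decide)
  have h2C : ({2} : Finset ℕ) ∈ C := ⟨⟨2, by decide⟩, by decide, Or.inl h2B⟩
  have h4C : ({4} : Finset ℕ) ∈ C := ⟨⟨4, by decide⟩, by decide, Or.inl h4B⟩
  have h5C : ({5} : Finset ℕ) ∈ C := ⟨⟨5, by decide⟩, by decide, Or.inl h5B⟩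
  have h24B : ({2, 4} : Finset ℕ) ∪ S ∈ B := Or.inl (Or.inl (Or.inr ⟨{3, 4}, by decide, by decide⟩))
  have h24C : ({2, 4} : Finset ℕ) ∈ C := ⟨⟨2, by decide⟩, by decide, Or.inr h24B⟩
  have h25C : ({2, 5} : Finset ℕ) ∈ C :=
    ⟨⟨2, by decide⟩, by decide, Or.inr (Or.inl (Or.inl (Or.inr ⟨{3, 5}, by decide, by decide⟩)))⟩
  have hunion : ({2} : Finset ℕ) ∪ {4} = ({2, 4} : Finset ℕ) := by decide
  refine ⟨hS, h2C, h4C, by decide, hunion ▸ h24C, hunion ▸ pair24_not_mem, ?_, ?_, ?_⟩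
  · -- {{2},{4}} in the full subcomplex
    refine ⟨⟨?_, ?_, ?_⟩, ?_⟩
    · intro T hT
      rcases Finset.mem_insert.mp hT with rfl | hT
      · exact ⟨h2B, by decide⟩
      · rw [Finset.mem_singleton] at hT; subst hT
        exact ⟨h4B, by decide⟩
    · intro T₁ h₁ T₂ h₂
      rcases Finset.mem_insert.mp h₁ with rfl | h₁ <;> rcases Finset.mem_insert.mp h₂ with rfl | h₂ <;>
        first
          | (right; left; rfl)
          | (rw [Finset.mem_singleton] at *; subst_vars; first | (right; left; rfl) | (left; decide))
    · intro 𝒮 hsub hcard hpw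
      have h𝒮 : 𝒮 = ({{2}, {4}} : Finset (Finset ℕ)) :=
        Finset.eq_of_subset_of_card_le hsub (by rw [show (({{2}, {4}} : Finset (Finset ℕ))).card = 2 from by decide]; exact hcard)
      subst h𝒮
      have : (({{2}, {4}} : Finset (Finset ℕ))).sup id = ({2, 4} : Finset ℕ) := by decide
      rw [this]
      exact pair24_not_mem
    · intro T hT
      rcases Finset.mem_insert.mp hT with rfl | hT
      · exact ⟨h2C, h2B⟩
      · rw [Finset.mem_singleton] at hT; subst hT
        exact ⟨h4C, h4B⟩
  · -- {{2},{4}} not nested w.r.t. C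
    intro h
    have hpw : (↑({{2}, {4}} : Finset (Finset ℕ)) : Set (Finset ℕ)).Pairwise Disjoint := by
      intro a ha b hb hab
      simp only [Finset.coe_insert, Finset.coe_singleton, Set.mem_insert_iff,
        Set.mem_singleton_iff] at ha hb
      rcases ha with rfl | rfl <;> rcases hb with rfl | rfl <;>
        first | (exact absurd rfl hab) | decide
    have := h.2.2 ({{2}, {4}} : Finset (Finset ℕ)) (subset_refl _) (by decide) hpw
    have hsup : (({{2}, {4}} : Finset (Finset ℕ))).sup id = ({2, 4} : Finset ℕ) := by decide
    rw [hsup] at this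
    exact this h24C
  · -- no bijection
    rintro ⟨f, hbij, -⟩
    have hsurj := hbij.2.2
    have hCBA : (C ∩ B : Set (Finset ℕ)) ⊆ ↑({{2}, {4}, {5}} : Finset (Finset ℕ)) := by
      rintro T ⟨⟨-, hsub, -⟩, hB⟩
      rcases mem_BP_cases hB with ⟨i, rfl⟩ | h1
      · have hi : i ∈ Finset.Icc 1 5 \ ({1, 3} : Finset ℕ) :=
          hsub (Finset.mem_singleton_self i)
        simp only [Finset.mem_sdiff, Finset.mem_Icc, Finset.mem_insert,
          Finset.mem_singleton] at hi
        have : i = 2 ∨ i = 4 ∨ i = 5 := by omega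
        rcases this with rfl | rfl | rfl <;> decide
      · have : (1 : ℕ) ∈ Finset.Icc 1 5 \ ({1, 3} : Finset ℕ) := hsub h1
        exact absurd this (by decide)
    have hD : ∀ d ∈ ({{2}, {4}, {2, 4}, {2, 5}} : Finset (Finset ℕ)),
        d ∈ (C \ {V \ S} : Set (Finset ℕ)) := by
      intro d hd
      have hd' : d = {2} ∨ d = {4} ∨ d = {2, 4} ∨ d = {2, 5} := by
        simpa only [Finset.mem_insert, Finset.mem_singleton] using hd
      rcases hd' with rfl | rfl | rfl | rfl
      · exact ⟨h2C, by decide⟩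
      · exact ⟨h4C, by decide⟩
      · exact ⟨h24C, by decide⟩
      · exact ⟨h25C, by decide⟩
    have hDsub : ({{2}, {4}, {2, 4}, {2, 5}} : Finset (Finset ℕ)) ⊆
        (({{2}, {4}, {5}} : Finset (Finset ℕ))).image f := by
      intro d hd
      obtain ⟨x, hx, hfx⟩ := hsurj (hD d hd)
      exact Finset.mem_image.mpr ⟨x, hCBA hx, hfx⟩
    have h1 := Finset.card_le_card hDsub
    have h2 := Finset.card_image_le (f := f) (s := ({{2}, {4}, {5}} : Finset (Finset ℕ)))
    rw [show (({{2}, {4}, {2, 4}, {2, 5}} : Finset (Finset ℕ))).card = 4 from by decide] at h1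
    rw [show (({{2}, {4}, {5}} : Finset (Finset ℕ))).card = 3 from by decide] at h2
    omega
end

section
/- In the differential ring of polytopes with d St ⁿ = n·Stⁿ⁻¹ + Σ_{s=0}^{n-1} C(n,s)·Stˢ × Pe^{n−s−1}, the generating series St(x) = Σ_{s≥0} Stˢ xˢ/s! and Pe(x) = Σ_{s≥0} Peˢ x^{s+1}/(s+1)! satisfy d St(x) = (x + Pe(x))·St(x). -/
open PowerSeries

/-- In the (rationalized) differential ring of polytopes, given the boundary formula
`dStⁿ = n·Stⁿ⁻¹ + Σ_{s=0}^{n-1} C(n,s)·Stˢ × Pe^{n-s-1}`, the generating series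
`St(x) = Σ Stˢ xˢ/s!` and `Pe(x) = Σ Peˢ x^{s+1}/(s+1)!` satisfy
`d St(x) = (x + Pe(x))·St(x)`, with `d` applied coefficientwise. -/
theorem stellahedra_boundary_series (A : Type*) [CommRing A] [Algebra ℚ A]
    (d : A →+ A) (hLeib : ∀ a b : A, d (a * b) = d a * b + a * d b) (Pe St : ℕ → A)
    (hSt : ∀ n : ℕ, d (St n) = (n : A) * St (n - 1) + ∑ s ∈ Finset.range n,
        (Nat.choose n s : A) * (St s * Pe (n - s - 1))) :
    (PowerSeries.mk fun k => (k.factorial : ℚ)⁻¹ • d (St k)) =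
      (PowerSeries.X +
          PowerSeries.mk fun k =>
            if k = 0 then (0 : A) else (k.factorial : ℚ)⁻¹ • Pe (k - 1)) *
        PowerSeries.mk fun k => (k.factorial : ℚ)⁻¹ • St k := by
  ext k
  rw [add_mul, map_add, PowerSeries.coeff_mk]
  cases k with
  | zero =>
    simp [hSt 0, PowerSeries.coeff_mul]
  | succ n =>
    rw [PowerSeries.coeff_succ_X_mul, PowerSeries.coeff_mk, PowerSeries.coeff_mul,
      hSt (n+1), smul_add]
    congr 1
    · have h1 : ((n+1 : ℕ) : A) * St (n + 1 - 1) = ((n+1 : ℕ) : ℚ) • St n := by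
        rw [Nat.cast_smul_eq_nsmul, nsmul_eq_mul]
        norm_num
      rw [h1, smul_smul]
      congr 1
      rw [Nat.factorial_succ]
      push_cast
      have := Nat.factorial_pos n
      field_simp
    · rw [Finset.smul_sum]
      conv_rhs => rw [Finset.Nat.sum_antidiagonal_eq_sum_range_succ_mk, Finset.sum_range_succ']
      simp only [PowerSeries.coeff_mk, reduceIte, zero_mul, add_zero]
      conv_rhs => rw [← Finset.sum_range_reflect]
      refine Finset.sum_congr rfl fun s hs => ?_
      rw [Finset.mem_range] at hs
      have hs' : s ≤ n := Nat.lt_succ_iff.mp hs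
      have e1 : n + 1 - 1 - s + 1 ≠ 0 := by omega
      rw [if_neg e1]
      have e2 : n + 1 - 1 - s = n - s := by omega
      have e3 : n + 1 - (n - s + 1) = s := by omega
      have e4 : n + 1 - s - 1 = n - s := by omega
      have e5 : n - s + 1 - 1 = n - s := by omega
      rw [e2, e3, e4, e5]
      rw [smul_mul_smul_comm]
      have hc : ((n+1).choose s : A) * (St s * Pe (n - s)) =
          (((n+1).choose s : ℚ)) • (St s * Pe (n - s)) := by
        rw [Nat.cast_smul_eq_nsmul, nsmul_eq_mul]
      rw [hc, smul_smul]
      rw [mul_comm (Pe (n - s)) (St s)]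
      congr 1
      have key : (n+1).choose s * s.factorial * (n + 1 - s).factorial = (n+1).factorial :=
        Nat.choose_mul_factorial_mul_factorial (by omega)
      have e6 : n + 1 - s = n - s + 1 := by omega
      rw [e6] at key
      have f1 := Nat.factorial_pos (n+1)
      have f2 := Nat.factorial_pos s
      have f3 := Nat.factorial_pos (n - s + 1)
      field_simp
      have := congrArg (Nat.cast : ℕ → ℚ) key
      push_cast at this
      linarith [this]
end
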